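/- arXiv:2309.12915 — 2 statements merged into one kernel-verified Lean document; each statement's English description precedes it below -/
import Mathlib

section
/- Let G be a group acting transitively on a countable set Q, let x₀ ∈ Q, and let G_{x₀} be its stabilizer. Let π be the representation of G on ℓ¹₀Q given by (π(g)f)(q) = f(g⁻¹q) (each π(g) is an isometry of ℓ¹₀Q), let β : G → ℓ¹₀Q be the coboundary β(g) = δ_{x₀} − δ_{g·x₀}, and suppose α : G → ℓ¹₀Q satisfies α(1) = 0, α(gh) = α(g) for all g ∈ G and h ∈ G_{x₀}, and is a quasi-cocycle for π, i.e. Δ(α) = sup_{g,g'∈G} ‖α(gg') − α(g) − π(g)α(g')‖ < ∞. Then there exists a representation Π of G on ℓ¹₀Q ⊕₁ ℓ¹₀Q by bounded operators with ‖Π(g)‖_op ≤ 1 + Δ(α) for all g ∈ G, such that ζ(g) = (α(g), β(g)) is a cocycle for Π, i.e. ζ(gh) = ζ(g) + Π(g)ζ(h) for all g,h ∈ G. -/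
set_option synthInstance.maxHeartbeats 400000
set_option maxHeartbeats 1000000


open scoped ENNReal

/-- Any element of `ℓ¹Q` is summable. -/
theorem l1summable {Q : Type*} (f : lp (fun _ : Q => ℝ) 1) : Summable fun q : Q => f q := by
  have h := (lp.memℓp f).summable (p := 1) (by norm_num)
  simp only [ENNReal.toReal_one, Real.rpow_one] at h
  exact h.of_norm

/-- `ℓ¹₀Q`, the subspace of zero-sum elements of `ℓ¹Q`. -/
noncomputable def l1zero (Q : Type*) : Submodule ℝ (lp (fun _ : Q => ℝ) 1) where
  carrier := {f | ∑' q : Q, f q = 0}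
  add_mem' := by
    intro f g hf hg
    simp only [Set.mem_setOf_eq] at *
    have hpt : ∀ q : Q, (f + g) q = f q + g q := fun q => by
      rw [lp.coeFn_add]; rfl
    rw [tsum_congr hpt, (l1summable f).tsum_add (l1summable g), hf, hg, add_zero]
  zero_mem' := by
    simp only [Set.mem_setOf_eq]
    have hpt : ∀ q : Q, (0 : lp (fun _ : Q => ℝ) 1) q = 0 := fun q => by
      rw [lp.coeFn_zero]; rfl
    rw [tsum_congr hpt, tsum_zero]
  smul_mem' := by
    intro c f hf
    simp only [Set.mem_setOf_eq] at *
    have hpt : ∀ q : Q, (c • f) q = c * f q := fun q => by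
      rw [lp.coeFn_smul]; rfl
    rw [tsum_congr hpt, tsum_mul_left, hf, mul_zero]

theorem l1norm_eq {Q : Type*} (f : lp (fun _ : Q => ℝ) 1) : ‖f‖ = ∑' q, ‖f q‖ := by
  rw [lp.norm_eq_tsum_rpow (by norm_num) f]
  simp

theorem l1summable_norm {Q : Type*} (f : lp (fun _ : Q => ℝ) 1) :
    Summable fun q : Q => ‖f q‖ := by
  have h := (lp.memℓp f).summable (p := 1) (by norm_num)
  simpa using h

noncomputable def sumCLM (Q : Type*) : lp (fun _ : Q => ℝ) 1 →L[ℝ] ℝ :=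
  LinearMap.mkContinuous
    { toFun := fun f => ∑' q, f q
      map_add' := fun f g => by
        have hpt : ∀ q : Q, (f + g) q = f q + g q := fun q => by rw [lp.coeFn_add]; rfl
        show ∑' q, (f + g) q = _
        rw [tsum_congr hpt, Summable.tsum_add (l1summable f) (l1summable g)]
      map_smul' := fun c f => by
        have hpt : ∀ q : Q, (c • f) q = c * f q := fun q => by rw [lp.coeFn_smul]; rfl
        show ∑' q, (c • f) q = _
        simp only [RingHom.id_apply, smul_eq_mul]
        rw [tsum_congr hpt, tsum_mul_left] }
    1 (fun f => by
      simp only [LinearMap.coe_mk, AddHom.coe_mk, one_mul]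
      calc ‖∑' q, f q‖ ≤ ∑' q, ‖f q‖ := norm_tsum_le_tsum_norm (l1summable_norm f)
        _ = ‖f‖ := (l1norm_eq f).symm)

instance l1zero_complete (Q : Type*) : CompleteSpace ↥(l1zero Q) := by
  haveI : Fact ((1:ℝ≥0∞) ≤ 1) := ⟨le_refl _⟩
  have hc : IsClosed ((l1zero Q : Set (lp (fun _ : Q => ℝ) 1))) := by
    have : (l1zero Q : Set (lp (fun _ : Q => ℝ) 1)) = {f | sumCLM Q f = 0} := rfl
    rw [this]
    exact isClosed_eq (sumCLM Q).continuous continuous_const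
  exact hc.completeSpace_coe

section main

variable {G Q : Type*} [Group G] [MulAction G Q] [MulAction.IsPretransitive G Q]

noncomputable def secmap (G : Type*) {Q : Type*} [Group G] [MulAction G Q]
    [MulAction.IsPretransitive G Q] (x₀ q : Q) : G :=
  (MulAction.exists_smul_eq G x₀ q).choose

theorem secmap_smul (x₀ q : Q) : secmap G x₀ q • x₀ = q :=
  (MulAction.exists_smul_eq G x₀ q).choose_spec

variable (x₀ : Q) (π : G → (↥(l1zero Q) →L[ℝ] ↥(l1zero Q))) (α : G → ↥(l1zero Q))

/-- `cc g q = α(g hq) - α(g) - π(g)α(hq)` where `hq • x₀ = q`. -/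
noncomputable def cc (g : G) (q : Q) : ↥(l1zero Q) :=
  α (g * secmap G x₀ q) - α g - π g (α (secmap G x₀ q))

theorem cc_eq (hαstab : ∀ g h : G, h ∈ MulAction.stabilizer G x₀ → α (g * h) = α g)
    (g h : G) : cc x₀ π α g (h • x₀) = α (g * h) - α g - π g (α h) := by
  set q := h • x₀ with hq
  have hs : h⁻¹ * secmap G x₀ q ∈ MulAction.stabilizer G x₀ := by
    have := secmap_smul (G := G) x₀ q
    rw [MulAction.mem_stabilizer_iff, mul_smul, this, hq, inv_smul_smul]
  have h1 : α (secmap G x₀ q) = α h := by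
    have : secmap G x₀ q = h * (h⁻¹ * secmap G x₀ q) := by group
    rw [this, hαstab h _ hs]
  have h2 : α (g * secmap G x₀ q) = α (g * h) := by
    have : g * secmap G x₀ q = (g * h) * (h⁻¹ * secmap G x₀ q) := by group
    rw [this, hαstab (g * h) _ hs]
  rw [cc, h1, h2]

theorem cc_norm_le (Δ : ℝ) (hΔ : ∀ g g' : G, ‖α (g * g') - α g - π g (α g')‖ ≤ Δ)
    (g : G) (q : Q) : ‖cc x₀ π α g q‖ ≤ Δ := hΔ g _

theorem cc_base (hα1 : α 1 = 0)
    (hαstab : ∀ g h : G, h ∈ MulAction.stabilizer G x₀ → α (g * h) = α g)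
    (g : G) : cc x₀ π α g x₀ = 0 := by
  have := cc_eq x₀ π α hαstab g 1
  rw [one_smul] at this
  rw [this, hα1, mul_one, map_zero, sub_zero, sub_self]

theorem cc_key (hπmul : ∀ g h : G, π (g * h) = π g ∘L π h)
    (hαstab : ∀ g h : G, h ∈ MulAction.stabilizer G x₀ → α (g * h) = α g)
    (g h : G) (q : Q) :
    cc x₀ π α (g * h) q
      = π g (cc x₀ π α h q) + cc x₀ π α g (h • q)
        - (α (g * h) - α g - π g (α h)) := by
  obtain ⟨k, hk⟩ : ∃ k : G, k • x₀ = q := MulAction.exists_smul_eq G x₀ q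
  have e1 : cc x₀ π α (g * h) q = α (g * h * k) - α (g * h) - π (g * h) (α k) := by
    rw [← hk]; exact cc_eq x₀ π α hαstab (g * h) k
  have e2 : cc x₀ π α h q = α (h * k) - α h - π h (α k) := by
    rw [← hk]; exact cc_eq x₀ π α hαstab h k
  have e3 : cc x₀ π α g (h • q) = α (g * (h * k)) - α g - π g (α (h * k)) := by
    rw [← hk, ← mul_smul]; exact cc_eq x₀ π α hαstab g (h * k)
  rw [e1, e2, e3]
  simp only [map_sub, hπmul, ContinuousLinearMap.comp_apply, mul_assoc]
  abel

end main

section Tsec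

variable {Q : Type*}

theorem summable_norm_smul_bdd {E : Type*} [NormedAddCommGroup E] [NormedSpace ℝ E]
    (f : lp (fun _ : Q => ℝ) 1) (d : Q → E) {Δ : ℝ}
    (hd : ∀ q, ‖d q‖ ≤ Δ) : Summable fun q => ‖(f q • d q : E)‖ := by
  refine Summable.of_nonneg_of_le (fun q => norm_nonneg _) (fun q => ?_)
    ((l1summable_norm f).mul_right Δ)
  rw [norm_smul]
  exact mul_le_mul_of_nonneg_left (hd q) (norm_nonneg _)

theorem summable_smul_bdd {E : Type*} [NormedAddCommGroup E] [NormedSpace ℝ E]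
    [CompleteSpace E] (f : lp (fun _ : Q => ℝ) 1) (d : Q → E) {Δ : ℝ}
    (hd : ∀ q, ‖d q‖ ≤ Δ) : Summable fun q => f q • d q :=
  (summable_norm_smul_bdd f d hd).of_norm

theorem norm_tsum_smul_bdd {E : Type*} [NormedAddCommGroup E] [NormedSpace ℝ E]
    [CompleteSpace E] (f : lp (fun _ : Q => ℝ) 1) (d : Q → E) {Δ : ℝ}
    (hd : ∀ q, ‖d q‖ ≤ Δ) : ‖∑' q, f q • d q‖ ≤ Δ * ‖f‖ := by
  calc ‖∑' q, f q • d q‖ ≤ ∑' q, ‖f q • d q‖ :=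
        norm_tsum_le_tsum_norm (summable_norm_smul_bdd f d hd)
    _ ≤ ∑' q, ‖f q‖ * Δ := by
        apply Summable.tsum_le_tsum _ (summable_norm_smul_bdd f d hd)
          ((l1summable_norm f).mul_right Δ)
        intro q
        rw [norm_smul]
        exact mul_le_mul_of_nonneg_left (hd q) (norm_nonneg _)
    _ = Δ * ‖f‖ := by rw [tsum_mul_right, l1norm_eq, mul_comm]

end Tsec

section Tdef

variable {G Q : Type*} [Group G] [MulAction G Q] [MulAction.IsPretransitive G Q]
variable (x₀ : Q) (π : G → (↥(l1zero Q) →L[ℝ] ↥(l1zero Q))) (α : G → ↥(l1zero Q))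
variable (Δ : ℝ) (hΔ : ∀ g g' : G, ‖α (g * g') - α g - π g (α g')‖ ≤ Δ)

/-- The operator `T g : f ↦ ∑' q, f q • cc g q` on `ℓ¹₀Q`. -/
noncomputable def Tmap (g : G) : ↥(l1zero Q) →L[ℝ] ↥(l1zero Q) :=
  LinearMap.mkContinuous
    { toFun := fun f => ∑' q, ((f : lp (fun _ : Q => ℝ) 1) q) • cc x₀ π α g q
      map_add' := fun f f' => by
        have hpt : ∀ q : Q,
            (((f + f' : ↥(l1zero Q)) : lp (fun _ : Q => ℝ) 1) q) • cc x₀ π α g q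
            = ((f : lp (fun _ : Q => ℝ) 1) q) • cc x₀ π α g q
              + ((f' : lp (fun _ : Q => ℝ) 1) q) • cc x₀ π α g q := by
          intro q
          have : ((f + f' : ↥(l1zero Q)) : lp (fun _ : Q => ℝ) 1) q
              = (f : lp (fun _ : Q => ℝ) 1) q + (f' : lp (fun _ : Q => ℝ) 1) q := by
            rw [Submodule.coe_add, lp.coeFn_add]; rfl
          rw [this, add_smul]
        show (∑' q, ((f + f' : ↥(l1zero Q)) : lp (fun _ : Q => ℝ) 1) q • cc x₀ π α g q)
          = (∑' q, ((f : lp (fun _ : Q => ℝ) 1) q) • cc x₀ π α g q)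
            + (∑' q, ((f' : lp (fun _ : Q => ℝ) 1) q) • cc x₀ π α g q)
        rw [tsum_congr hpt,
          Summable.tsum_add (summable_smul_bdd _ _ (cc_norm_le x₀ π α Δ hΔ g))
            (summable_smul_bdd _ _ (cc_norm_le x₀ π α Δ hΔ g))]
      map_smul' := fun c f => by
        have hpt : ∀ q : Q,
            (((c • f : ↥(l1zero Q)) : lp (fun _ : Q => ℝ) 1) q) • cc x₀ π α g q
            = c • (((f : lp (fun _ : Q => ℝ) 1) q) • cc x₀ π α g q) := by
          intro q
          have : ((c • f : ↥(l1zero Q)) : lp (fun _ : Q => ℝ) 1) q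
              = c * (f : lp (fun _ : Q => ℝ) 1) q := by
            rw [Submodule.coe_smul, lp.coeFn_smul]; rfl
          rw [this, mul_smul]
        show (∑' q, ((c • f : ↥(l1zero Q)) : lp (fun _ : Q => ℝ) 1) q • cc x₀ π α g q)
          = c • (∑' q, ((f : lp (fun _ : Q => ℝ) 1) q) • cc x₀ π α g q)
        rw [tsum_congr hpt,
          Summable.tsum_const_smul c (summable_smul_bdd _ _ (cc_norm_le x₀ π α Δ hΔ g))] }
    Δ (fun f => norm_tsum_smul_bdd _ _ (cc_norm_le x₀ π α Δ hΔ g))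

theorem Tmap_apply (g : G) (f : ↥(l1zero Q)) :
    Tmap x₀ π α Δ hΔ g f = ∑' q, ((f : lp (fun _ : Q => ℝ) 1) q) • cc x₀ π α g q := rfl

theorem Tmap_norm_le (g : G) (f : ↥(l1zero Q)) :
    ‖Tmap x₀ π α Δ hΔ g f‖ ≤ Δ * ‖f‖ :=
  norm_tsum_smul_bdd _ _ (cc_norm_le x₀ π α Δ hΔ g)

end Tdef

section Tlem

variable {G Q : Type*} [Group G] [MulAction G Q] [MulAction.IsPretransitive G Q]
variable (x₀ : Q) (π : G → (↥(l1zero Q) →L[ℝ] ↥(l1zero Q))) (α : G → ↥(l1zero Q))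
variable (Δ : ℝ) (hΔ : ∀ g g' : G, ‖α (g * g') - α g - π g (α g')‖ ≤ Δ)

theorem Tmap_one (hπ1 : π 1 = 1) (hα1 : α 1 = 0) : Tmap x₀ π α Δ hΔ 1 = 0 := by
  ext f
  rw [Tmap_apply]
  have : ∀ q : Q, cc x₀ π α 1 q = 0 := by
    intro q
    rw [cc, one_mul, hπ1, hα1]
    simp
  simp [this]

theorem Tmap_mul
    (hπmul : ∀ g h : G, π (g * h) = π g ∘L π h)
    (hπpt : ∀ (g : G) (f : ↥(l1zero Q)) (q : Q),
      ((π g f : ↥(l1zero Q)) : lp (fun _ : Q => ℝ) 1) q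
        = (f : lp (fun _ : Q => ℝ) 1) (g⁻¹ • q))
    (hπiso : ∀ (g : G) (f : ↥(l1zero Q)), ‖π g f‖ = ‖f‖)
    (hαstab : ∀ g h : G, h ∈ MulAction.stabilizer G x₀ → α (g * h) = α g)
    (g h : G) :
    Tmap x₀ π α Δ hΔ (g * h)
      = (π g).comp (Tmap x₀ π α Δ hΔ h) + (Tmap x₀ π α Δ hΔ g).comp (π h) := by
  refine ContinuousLinearMap.ext fun f => ?_
  set F : lp (fun _ : Q => ℝ) 1 := (f : lp (fun _ : Q => ℝ) 1) with hF
  have hsum0 : ∑' q, F q = 0 := f.2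
  set D : ↥(l1zero Q) := α (g * h) - α g - π g (α h) with hD
  have hb1 : ∀ q : Q, ‖π g (cc x₀ π α h q)‖ ≤ Δ := fun q => by
    rw [hπiso]; exact cc_norm_le x₀ π α Δ hΔ h q
  have hb2 : ∀ q : Q, ‖cc x₀ π α g (h • q)‖ ≤ Δ := fun q =>
    cc_norm_le x₀ π α Δ hΔ g (h • q)
  have hs1 : Summable fun q => F q • π g (cc x₀ π α h q) := summable_smul_bdd F _ hb1
  have hs2 : Summable fun q => F q • cc x₀ π α g (h • q) := summable_smul_bdd F _ hb2
  have hs3 : Summable fun q => F q • D := (l1summable F).smul_const D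
  have key : (fun q => F q • cc x₀ π α (g * h) q)
      = fun q => (F q • π g (cc x₀ π α h q) + F q • cc x₀ π α g (h • q)) - F q • D := by
    funext q
    rw [cc_key x₀ π α hπmul hαstab g h q]
    rw [smul_sub, smul_add]
  have lhs : Tmap x₀ π α Δ hΔ (g * h) f
      = (∑' q, F q • π g (cc x₀ π α h q)) + ∑' q, F q • cc x₀ π α g (h • q) := by
    rw [Tmap_apply, ← hF, key, Summable.tsum_sub (hs1.add hs2) hs3,
      Summable.tsum_add hs1 hs2, Summable.tsum_smul_const (l1summable F) D, hsum0, zero_smul, sub_zero]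
  have e1 : (∑' q, F q • π g (cc x₀ π α h q)) = π g (Tmap x₀ π α Δ hΔ h f) := by
    rw [Tmap_apply, ← hF,
      ContinuousLinearMap.map_tsum _ (summable_smul_bdd F _ (cc_norm_le x₀ π α Δ hΔ h))]
    exact tsum_congr fun q => by rw [ContinuousLinearMap.map_smul]
  have e2 : Tmap x₀ π α Δ hΔ g (π h f) = ∑' q, F q • cc x₀ π α g (h • q) := by
    have hcoe : ∀ q : Q, ((π h f : ↥(l1zero Q)) : lp (fun _ : Q => ℝ) 1) q
        = F (h⁻¹ • q) := fun q => by rw [hπpt h f q, hF]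
    calc Tmap x₀ π α Δ hΔ g (π h f)
        = ∑' q, ((π h f : ↥(l1zero Q)) : lp (fun _ : Q => ℝ) 1) q • cc x₀ π α g q :=
          Tmap_apply x₀ π α Δ hΔ g (π h f)
      _ = ∑' q, F (h⁻¹ • q) • cc x₀ π α g q := tsum_congr fun q => by rw [hcoe q]
      _ = ∑' q, F (h⁻¹ • (h • q)) • cc x₀ π α g (h • q) :=
          (Equiv.tsum_eq (MulAction.toPerm h)
            (fun q => F (h⁻¹ • q) • cc x₀ π α g q)).symm
      _ = ∑' q, F q • cc x₀ π α g (h • q) := tsum_congr fun q => by rw [inv_smul_smul]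
  rw [lhs, e1, ← e2, ContinuousLinearMap.add_apply, ContinuousLinearMap.comp_apply,
    ContinuousLinearMap.comp_apply]

theorem Tmap_beta [DecidableEq Q] (β : G → ↥(l1zero Q))
    (hβ : ∀ g : G, (β g : lp (fun _ : Q => ℝ) 1)
      = lp.single 1 x₀ (1 : ℝ) - lp.single 1 (g • x₀) (1 : ℝ))
    (g h : G) :
    Tmap x₀ π α Δ hΔ g (β h) = cc x₀ π α g x₀ - cc x₀ π α g (h • x₀) := by
  have h1 : HasSum (fun q => (if q = x₀ then (1:ℝ) else 0) • cc x₀ π α g q)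
      (cc x₀ π α g x₀) := by
    have heq : (fun q => (if q = x₀ then (1:ℝ) else 0) • cc x₀ π α g q)
        = fun q => if q = x₀ then cc x₀ π α g x₀ else 0 := by
      funext q
      split_ifs with hq
      · subst hq; rw [one_smul]
      · rw [zero_smul]
    rw [heq]
    exact hasSum_ite_eq x₀ _
  have h2 : HasSum (fun q => (if q = h • x₀ then (1:ℝ) else 0) • cc x₀ π α g q)
      (cc x₀ π α g (h • x₀)) := by
    have heq : (fun q => (if q = h • x₀ then (1:ℝ) else 0) • cc x₀ π α g q)
        = fun q => if q = h • x₀ then cc x₀ π α g (h • x₀) else 0 := by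
      funext q
      split_ifs with hq
      · subst hq; rw [one_smul]
      · rw [zero_smul]
    rw [heq]
    exact hasSum_ite_eq (h • x₀) _
  have h3 := h1.sub h2
  have heq2 : (fun q => (if q = x₀ then (1:ℝ) else 0) • cc x₀ π α g q
      - (if q = h • x₀ then (1:ℝ) else 0) • cc x₀ π α g q)
      = fun q => ((β h : lp (fun _ : Q => ℝ) 1) q) • cc x₀ π α g q := by
    funext q
    have : (β h : lp (fun _ : Q => ℝ) 1) q
        = (if q = x₀ then (1:ℝ) else 0) - (if q = h • x₀ then (1:ℝ) else 0) := by
      rw [hβ h, lp.coeFn_sub, Pi.sub_apply]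
      congr 1
      · by_cases hq : q = x₀
        · subst hq; rw [lp.single_apply_self, if_pos rfl]
        · rw [lp.single_apply_ne _ _ _ hq, if_neg hq]
      · by_cases hq : q = h • x₀
        · subst hq; rw [lp.single_apply_self, if_pos rfl]
        · rw [lp.single_apply_ne _ _ _ hq, if_neg hq]
    rw [this, sub_smul]
  rw [heq2] at h3
  rw [Tmap_apply]
  exact h3.tsum_eq

end Tlem

/-- Given a transitive action of `G` on a countable set `Q`, the regular representation `π` on
`ℓ¹₀Q` (given by `(π(g)f)(q) = f(g⁻¹q)`, an isometry), the coboundary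
`β(g) = δ_{x₀} − δ_{g·x₀}`, and a quasi-cocycle `α` for `π` with defect at most `Δ`, vanishing
at `1` and invariant under the stabilizer of `x₀`, there is a representation `Π` of `G` on
`ℓ¹₀Q ⊕₁ ℓ¹₀Q` by operators of norm at most `1 + Δ` for which `ζ = (α, β)` is a cocycle. -/
theorem exists_unifBounded_rep_with_cocycle {G Q : Type*} [Group G] [Countable Q]
    [DecidableEq Q] [MulAction G Q] [MulAction.IsPretransitive G Q] (x₀ : Q)
    (π : G → (↥(l1zero Q) →L[ℝ] ↥(l1zero Q)))
    (hπ1 : π 1 = 1) (hπmul : ∀ g h : G, π (g * h) = π g ∘L π h)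
    (hπpt : ∀ (g : G) (f : ↥(l1zero Q)) (q : Q),
      ((π g f : ↥(l1zero Q)) : lp (fun _ : Q => ℝ) 1) q
        = (f : lp (fun _ : Q => ℝ) 1) (g⁻¹ • q))
    (hπiso : ∀ (g : G) (f : ↥(l1zero Q)), ‖π g f‖ = ‖f‖)
    (β : G → ↥(l1zero Q))
    (hβ : ∀ g : G, (β g : lp (fun _ : Q => ℝ) 1)
      = lp.single 1 x₀ (1 : ℝ) - lp.single 1 (g • x₀) (1 : ℝ))
    (α : G → ↥(l1zero Q)) (hα1 : α 1 = 0)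
    (hαstab : ∀ g h : G, h ∈ MulAction.stabilizer G x₀ → α (g * h) = α g)
    (Δ : ℝ) (hΔ : ∀ g g' : G, ‖α (g * g') - α g - π g (α g')‖ ≤ Δ) :
    ∃ P : G → (WithLp 1 (↥(l1zero Q) × ↥(l1zero Q)) →L[ℝ]
        WithLp 1 (↥(l1zero Q) × ↥(l1zero Q))),
      P 1 = 1 ∧ (∀ g h : G, P (g * h) = P g ∘L P h) ∧
      (∀ g : G, ‖P g‖ ≤ 1 + Δ) ∧
      (∀ g h : G,
        (WithLp.equiv 1 (↥(l1zero Q) × ↥(l1zero Q))).symm (α (g * h), β (g * h))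
          = (WithLp.equiv 1 (↥(l1zero Q) × ↥(l1zero Q))).symm (α g, β g)
            + P g ((WithLp.equiv 1 (↥(l1zero Q) × ↥(l1zero Q))).symm (α h, β h))) := by
  classical
  set T : G → (↥(l1zero Q) →L[ℝ] ↥(l1zero Q)) := Tmap x₀ π α Δ hΔ with hT
  set e : WithLp 1 (↥(l1zero Q) × ↥(l1zero Q)) ≃L[ℝ] ↥(l1zero Q) × ↥(l1zero Q) :=
    WithLp.prodContinuousLinearEquiv 1 ℝ (↥(l1zero Q)) (↥(l1zero Q)) with he
  set A : G → (↥(l1zero Q) × ↥(l1zero Q) →L[ℝ] ↥(l1zero Q) × ↥(l1zero Q)) := fun g =>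
    ((π g).comp (ContinuousLinearMap.fst ℝ _ _)
      - (T g).comp (ContinuousLinearMap.snd ℝ _ _)).prod
      ((π g).comp (ContinuousLinearMap.snd ℝ _ _)) with hA
  have hAapp : ∀ (g : G) (x : ↥(l1zero Q) × ↥(l1zero Q)),
      A g x = (π g x.1 - T g x.2, π g x.2) := fun g x => rfl
  refine ⟨fun g => (e.symm : _ →L[ℝ] _).comp ((A g).comp (e : _ →L[ℝ] _)),
    ?_, ?_, ?_, ?_⟩
  · -- P 1 = 1
    refine ContinuousLinearMap.ext fun v => ?_
    simp only [ContinuousLinearMap.comp_apply, ContinuousLinearEquiv.coe_coe,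
      ContinuousLinearMap.one_apply]
    have : A 1 (e v) = e v := by
      rw [hAapp]
      rw [hT, Tmap_one x₀ π α Δ hΔ hπ1 hα1, hπ1]
      simp
    rw [this, ContinuousLinearEquiv.symm_apply_apply]
  · -- multiplicative
    intro g h
    refine ContinuousLinearMap.ext fun v => ?_
    simp only [ContinuousLinearMap.comp_apply, ContinuousLinearEquiv.coe_coe]
    rw [ContinuousLinearEquiv.apply_symm_apply]
    congr 1
    rw [hAapp, hAapp, hAapp]
    have hfst : π (g * h) (e v).1 - T (g * h) (e v).2
        = π g (π h (e v).1 - T h (e v).2) - T g (π h (e v).2) := by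
      rw [hπmul, hT, Tmap_mul x₀ π α Δ hΔ hπmul hπpt hπiso hαstab g h]
      simp only [ContinuousLinearMap.comp_apply, ContinuousLinearMap.add_apply,
        map_sub]
      abel
    have hsnd : π (g * h) (e v).2 = π g (π h (e v).2) := by
      rw [hπmul]; rfl
    rw [hfst, hsnd]
  · -- norm bound
    intro g
    have hΔ0 : 0 ≤ Δ := by
      have h11 := hΔ 1 1
      simpa [hα1] using h11
    have hnorm : ∀ w : WithLp 1 (↥(l1zero Q) × ↥(l1zero Q)),
        ‖w‖ = ‖w.fst‖ + ‖w.snd‖ := by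
      intro w
      rw [WithLp.prod_norm_eq_add (by norm_num)]
      norm_num
    refine ContinuousLinearMap.opNorm_le_bound _ (by linarith) fun v => ?_
    simp only [ContinuousLinearMap.comp_apply, ContinuousLinearEquiv.coe_coe]
    have h1 : ‖(e.symm) (A g (e v))‖ = ‖π g (e v).1 - T g (e v).2‖ + ‖π g (e v).2‖ := by
      rw [hnorm]
      rfl
    have h2 : ‖v‖ = ‖(e v).1‖ + ‖(e v).2‖ := by
      rw [hnorm v]
      rfl
    have h3 : ‖π g (e v).1 - T g (e v).2‖ ≤ ‖(e v).1‖ + Δ * ‖(e v).2‖ := by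
      calc ‖π g (e v).1 - T g (e v).2‖ ≤ ‖π g (e v).1‖ + ‖T g (e v).2‖ := norm_sub_le _ _
        _ ≤ ‖(e v).1‖ + Δ * ‖(e v).2‖ := by
            rw [hπiso]
            exact add_le_add_right (Tmap_norm_le x₀ π α Δ hΔ g _) _
    have h4 : ‖π g (e v).2‖ = ‖(e v).2‖ := hπiso g _
    rw [h1, h2, h4]
    nlinarith [norm_nonneg (e v).1, norm_nonneg (e v).2]
  · -- cocycle
    intro g h
    have hπβ : ∀ g h : G, (π g (β h) : lp (fun _ : Q => ℝ) 1)
        = lp.single 1 (g • x₀) (1 : ℝ) - lp.single 1 ((g * h) • x₀) (1 : ℝ) := by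
      intro g h
      apply lp.ext
      funext q
      rw [hπpt g (β h) q, hβ h, lp.coeFn_sub, lp.coeFn_sub, Pi.sub_apply, Pi.sub_apply]
      congr 1
      · by_cases hq : q = g • x₀
        · subst hq
          rw [inv_smul_smul, lp.single_apply_self, lp.single_apply_self]
        · have hq' : g⁻¹ • q ≠ x₀ := fun hc => hq (by rw [← hc, smul_inv_smul])
          rw [lp.single_apply_ne _ _ _ hq', lp.single_apply_ne _ _ _ hq]
      · by_cases hq : q = (g * h) • x₀
        · subst hq
          rw [mul_smul, inv_smul_smul, lp.single_apply_self, lp.single_apply_self]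
        · have hq' : g⁻¹ • q ≠ h • x₀ := fun hc => hq (by
            rw [mul_smul, ← hc, smul_inv_smul])
          rw [lp.single_apply_ne _ _ _ hq', lp.single_apply_ne _ _ _ hq]
    have hβco : β (g * h) = β g + π g (β h) := by
      apply Subtype.ext
      rw [Submodule.coe_add, hβ, hβ, hπβ g h]
      abel
    have hTβ : T g (β h) = - (α (g * h) - α g - π g (α h)) := by
      rw [hT, Tmap_beta x₀ π α Δ hΔ β hβ g h, cc_base x₀ π α hα1 hαstab g,
        cc_eq x₀ π α hαstab g h, zero_sub]
    simp only [ContinuousLinearMap.comp_apply, ContinuousLinearEquiv.coe_coe]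
    have heapp : e ((WithLp.equiv 1 (↥(l1zero Q) × ↥(l1zero Q))).symm (α h, β h))
        = (α h, β h) := by
      exact (WithLp.equiv 1 _).apply_symm_apply (α h, β h)
    rw [heapp, hAapp]
    have : (e.symm) (π g (α h) - T g (β h), π g (β h))
        = (WithLp.equiv 1 (↥(l1zero Q) × ↥(l1zero Q))).symm
            (π g (α h) - T g (β h), π g (β h)) := rfl
    have hadd : ∀ x y : ↥(l1zero Q) × ↥(l1zero Q),
        (WithLp.equiv 1 (↥(l1zero Q) × ↥(l1zero Q))).symm (x + y)
          = (WithLp.equiv 1 (↥(l1zero Q) × ↥(l1zero Q))).symm x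
            + (WithLp.equiv 1 (↥(l1zero Q) × ↥(l1zero Q))).symm y := fun _ _ => rfl
    rw [this, ← hadd]
    congr 1
    refine Prod.ext ?_ ?_
    · show α (g * h) = α g + (π g (α h) - T g (β h))
      rw [hTβ]
      abel
    · show β (g * h) = β g + π g (β h)
      exact hβco
end

section
/- Let F₂ = ⟨a,b⟩, let π be the left regular representation of F₂ on ℓ¹₀F₂ given by (π(g)f)(x) = f(g⁻¹x), let e = δ₁ − δ_{a²} ∈ ℓ¹₀F₂ and w = ab, and define η(g) = ∑_{h ∈ w₊(g)} π(h)e − ∑_{h ∈ w₋(g)} π(h)e. Then for every n ≥ 1 one has w₋((ab)ⁿ) = ∅ and w₊((ab)ⁿ) = {(ab)^i : 0 ≤ i ≤ n−1}, hence η((ab)ⁿ) = ∑_{i=0}^{n−1} (δ_{(ab)^i} − δ_{(ab)^i a²}) and ‖η((ab)ⁿ)‖ = 2n; in particular η is unbounded. -/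
open scoped ENNReal

/-- The word length of an element of the free group `F₂`: the length of its reduced word. -/
def wlen (g : FreeGroup (Fin 2)) : ℕ := g.toWord.length

/-- For `w, g ∈ F₂`, the set of `h ∈ F₂` such that `h` and `hw` both lie, in this order, on
the geodesic from `1` to `g` in the Cayley tree of `F₂`. -/
def wplus (w g : FreeGroup (Fin 2)) : Set (FreeGroup (Fin 2)) :=
  {h | wlen (h * w) = wlen h + wlen w ∧
    wlen h + wlen (h⁻¹ * g) = wlen g ∧
    wlen (h * w) + wlen ((h * w)⁻¹ * g) = wlen g}

/-- For `w, g ∈ F₂`, the set of `h ∈ F₂` such that `hw` and `h` both lie, in this order, on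
the geodesic from `1` to `g` in the Cayley tree of `F₂`. -/
def wminus (w g : FreeGroup (Fin 2)) : Set (FreeGroup (Fin 2)) :=
  {h | wlen h = wlen (h * w) + wlen w ∧
    wlen h + wlen (h⁻¹ * g) = wlen g ∧
    wlen (h * w) + wlen ((h * w)⁻¹ * g) = wlen g}

/-- The generator `a` of `F₂`. -/
def genA : FreeGroup (Fin 2) := FreeGroup.of 0

/-- The generator `b` of `F₂`. -/
def genB : FreeGroup (Fin 2) := FreeGroup.of 1

section WordCombinatorics

open FreeGroup List

variable {α : Type*} [DecidableEq α]

lemma my_red_eq_of_length {L₁ L₂ : List (α × Bool)} (h : FreeGroup.Red L₁ L₂)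
    (hl : L₁.length = L₂.length) : L₁ = L₂ := by
  rcases Relation.ReflTransGen.cases_head h with rfl | ⟨L, hstep, hred⟩
  · rfl
  · have h1 := hstep.length
    have h2 := FreeGroup.Red.length_le hred
    omega

lemma my_reduce_eq_self_of_length {L : List (α × Bool)}
    (hl : (FreeGroup.reduce L).length = L.length) : FreeGroup.reduce L = L :=
  (my_red_eq_of_length (reduce.red) hl.symm).symm

lemma my_reduce_suffix {L₁ L₂ : List (α × Bool)} (h : FreeGroup.reduce (L₁ ++ L₂) = L₁ ++ L₂) :
    FreeGroup.reduce L₂ = L₂ := by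
  have hred : FreeGroup.Red (L₁ ++ L₂) (L₁ ++ FreeGroup.reduce L₂) :=
    Red.append_append Relation.ReflTransGen.refl reduce.red
  have := reduce.min (L₁ := L₁ ++ L₂) (h ▸ hred)
  rw [h] at this
  exact (List.append_cancel_left this).symm

lemma my_toWord_mul (x y : FreeGroup α) :
    (x * y).toWord = FreeGroup.reduce (x.toWord ++ y.toWord) := by
  conv_lhs => rw [← mk_toWord (x := x), ← mk_toWord (x := y), mul_mk]
  exact toWord_mk

/-- geodesic-prefix characterization -/
lemma my_wlen_prefix_iff (u g : FreeGroup α) :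
    u.toWord.length + (u⁻¹ * g).toWord.length = g.toWord.length ↔ u.toWord <+: g.toWord := by
  constructor
  · intro h
    have hg : g = u * (u⁻¹ * g) := by group
    have h2 : g.toWord = FreeGroup.reduce (u.toWord ++ (u⁻¹ * g).toWord) := by
      conv_lhs => rw [hg]
      exact my_toWord_mul _ _
    have h3 : FreeGroup.reduce (u.toWord ++ (u⁻¹ * g).toWord)
        = u.toWord ++ (u⁻¹ * g).toWord := by
      apply my_reduce_eq_self_of_length
      rw [← h2, List.length_append, h]
    rw [h2, h3]
    exact ⟨_, rfl⟩
  · rintro ⟨t, ht⟩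
    have htred : FreeGroup.reduce t = t := by
      apply my_reduce_suffix (L₁ := u.toWord)
      rw [ht, reduce_toWord]
    have hv : u⁻¹ * g = FreeGroup.mk t := by
      have : u * FreeGroup.mk t = g := by
        conv_lhs => rw [← mk_toWord (x := u), mul_mk]
        rw [ht, mk_toWord]
      rw [← this]; group
    rw [hv, toWord_mk, htred, ← ht, List.length_append]

/-- relation for reduced-ness -/
def myNR (x y : α × Bool) : Prop := ¬(x.1 = y.1 ∧ x.2 = !y.2)

instance myNR.decidable : DecidableRel (myNR (α := α)) := fun x y =>
  inferInstanceAs (Decidable ¬(x.1 = y.1 ∧ x.2 = !y.2))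

lemma my_reduce_eq_self_of_chain' {L : List (α × Bool)} (h : List.Chain' myNR L) :
    FreeGroup.reduce L = L := by
  induction L with
  | nil => rfl
  | cons x L ih =>
    have hL := ih h.tail
    rw [reduce.cons, hL]
    cases L with
    | nil => rfl
    | cons y t =>
      have hxy : myNR x y := (List.isChain_cons_cons.1 h).1
      show (if x.1 = y.1 ∧ x.2 = !y.2 then t else x :: y :: t) = x :: y :: t
      rw [if_neg hxy]

/-- the reduced word of `(ab)^n` -/
def myW : ℕ → List (Fin 2 × Bool)
  | 0 => []
  | n + 1 => ((0 : Fin 2), true) :: ((1 : Fin 2), true) :: myW n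

lemma myW_length (n : ℕ) : (myW n).length = 2 * n := by
  induction n with
  | zero => rfl
  | succ n ih => simp [myW, ih]; omega

lemma myW_append (m n : ℕ) : myW (m + n) = myW m ++ myW n := by
  induction m with
  | zero => simp [myW]
  | succ m ih =>
    have : m + 1 + n = (m + n) + 1 := by omega
    rw [this]; simp [myW, ih]

lemma my_chain_cons_W (l : List (Fin 2 × Bool))
    (h : List.Chain' myNR (((1 : Fin 2), true) :: l)) :
    ∀ i, List.Chain' myNR (((1 : Fin 2), true) :: (myW i ++ l)) := by
  intro i
  induction i with
  | zero => simpa [myW]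
  | succ i ih =>
    simp only [myW, List.cons_append]
    exact List.isChain_cons_cons.2 ⟨by decide, List.isChain_cons_cons.2 ⟨by decide, ih⟩⟩

lemma my_reduce_W_append (i : ℕ) (l : List (Fin 2 × Bool))
    (h : List.Chain' myNR (((1 : Fin 2), true) :: l)) :
    FreeGroup.reduce (myW i ++ l) = myW i ++ l :=
  my_reduce_eq_self_of_chain' (my_chain_cons_W l h i).tail

lemma my_prefix_W {P : List (Fin 2 × Bool)} {n : ℕ} (h : P <+: myW n) :
    (∃ i, i ≤ n ∧ P = myW i) ∨ (∃ i, i < n ∧ P = myW i ++ [((0 : Fin 2), true)]) := by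
  induction n generalizing P with
  | zero =>
    left; exact ⟨0, le_refl _, List.prefix_nil.1 h⟩
  | succ n ih =>
    rcases P with _ | ⟨x, P⟩
    · left; exact ⟨0, by omega, rfl⟩
    · rw [myW, List.cons_prefix_cons] at h
      obtain ⟨rfl, h⟩ := h
      rcases P with _ | ⟨y, P⟩
      · right; exact ⟨0, by omega, rfl⟩
      · rw [List.cons_prefix_cons] at h
        obtain ⟨rfl, h⟩ := h
        rcases ih h with ⟨i, hi, rfl⟩ | ⟨i, hi, rfl⟩
        · left; exact ⟨i + 1, by omega, rfl⟩
        · right; exact ⟨i + 1, by omega, rfl⟩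

end WordCombinatorics

section ABFacts

open FreeGroup List

lemma my_genA_mk : genA = FreeGroup.mk [((0 : Fin 2), true)] := rfl
lemma my_genB_mk : genB = FreeGroup.mk [((1 : Fin 2), true)] := rfl

lemma my_ab_mk : genA * genB = FreeGroup.mk [((0 : Fin 2), true), ((1 : Fin 2), true)] := by
  rw [my_genA_mk, my_genB_mk, mul_mk]; rfl

lemma my_aa_mk : genA * genA = FreeGroup.mk [((0 : Fin 2), true), ((0 : Fin 2), true)] := by
  rw [my_genA_mk, mul_mk]; rfl

lemma my_chain1 : List.Chain' myNR [((1 : Fin 2), true)] := List.isChain_singleton _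

lemma my_chain2 : List.Chain' myNR [((1 : Fin 2), true), ((0 : Fin 2), true)] :=
  List.isChain_cons_cons.2 ⟨by decide, List.isChain_singleton _⟩

lemma my_chain_a : List.Chain' myNR [((1 : Fin 2), true), ((0 : Fin 2), true)] := my_chain2

lemma my_chain_aa :
    List.Chain' myNR [((1 : Fin 2), true), ((0 : Fin 2), true), ((0 : Fin 2), true)] :=
  List.isChain_cons_cons.2 ⟨by decide, List.isChain_cons_cons.2 ⟨by decide, List.isChain_singleton _⟩⟩

lemma my_chain_aab :
    List.Chain' myNR
      [((1 : Fin 2), true), ((0 : Fin 2), true), ((0 : Fin 2), true), ((1 : Fin 2), true)] :=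
  List.isChain_cons_cons.2 ⟨by decide, List.isChain_cons_cons.2 ⟨by decide,
    List.isChain_cons_cons.2 ⟨by decide, List.isChain_singleton _⟩⟩⟩

lemma my_abpow_mk (n : ℕ) : (genA * genB) ^ n = FreeGroup.mk (myW n) := by
  induction n with
  | zero => simp [myW, one_eq_mk]
  | succ n ih =>
    rw [pow_succ', ih]
    rw [my_ab_mk, mul_mk]
    simp [myW]

lemma my_toWord_W_append (i : ℕ) (l : List (Fin 2 × Bool))
    (h : List.Chain' myNR (((1 : Fin 2), true) :: l)) :
    (FreeGroup.mk (myW i ++ l)).toWord = myW i ++ l :=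
  toWord_mk.trans (my_reduce_W_append i l h)

lemma my_toWord_abpow (n : ℕ) : ((genA * genB) ^ n).toWord = myW n := by
  rw [my_abpow_mk]
  simpa using my_toWord_W_append n [] my_chain1

lemma my_wlen_abpow (n : ℕ) : wlen ((genA * genB) ^ n) = 2 * n := by
  show (((genA * genB) ^ n).toWord).length = 2 * n
  rw [my_toWord_abpow, myW_length]

lemma my_abpowa_mk (i : ℕ) :
    (genA * genB) ^ i * genA = FreeGroup.mk (myW i ++ [((0 : Fin 2), true)]) := by
  rw [my_abpow_mk]
  rw [my_genA_mk, mul_mk]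

lemma my_abpowa_ab_mk (i : ℕ) :
    (genA * genB) ^ i * genA * (genA * genB)
      = FreeGroup.mk (myW i ++ [((0 : Fin 2), true), ((0 : Fin 2), true), ((1 : Fin 2), true)]) := by
  rw [my_abpowa_mk]
  rw [my_ab_mk, mul_mk]
  simp

lemma my_abpowaa_mk (i : ℕ) :
    (genA * genB) ^ i * (genA * genA)
      = FreeGroup.mk (myW i ++ [((0 : Fin 2), true), ((0 : Fin 2), true)]) := by
  rw [my_abpow_mk]
  rw [my_aa_mk, mul_mk]

lemma my_abpow_inj : Function.Injective (fun i : ℕ => (genA * genB) ^ i) := by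
  intro i j h
  have := congrArg (fun g => (FreeGroup.toWord g).length) h
  simp only [my_toWord_abpow, myW_length] at this
  omega

lemma my_abpow_ne_aa (i j : ℕ) : (genA * genB) ^ i ≠ (genA * genB) ^ j * (genA * genA) := by
  intro h
  have hW : myW i = myW j ++ [((0 : Fin 2), true), ((0 : Fin 2), true)] := by
    have := congrArg FreeGroup.toWord h
    rwa [my_toWord_abpow, my_abpowaa_mk, my_toWord_W_append j _ my_chain_aa] at this
  have hlen := congrArg List.length hW
  rw [myW_length, List.length_append, myW_length] at hlen
  simp at hlen
  have hij : i = j + 1 := by omega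
  rw [hij, myW_append j 1] at hW
  have := List.append_cancel_left hW
  simp [myW] at this

end ABFacts

section SetFacts

open FreeGroup List

lemma my_wlen_ab : wlen (genA * genB) = 2 := by
  have := my_wlen_abpow 1
  rwa [pow_one] at this

lemma my_W_prefix {i n : ℕ} (hin : i ≤ n) : myW i <+: myW n :=
  ⟨myW (n - i), by rw [← myW_append]; congr 1; omega⟩

lemma my_toWord_eq_abpow {h : FreeGroup (Fin 2)} {i : ℕ} (hW : h.toWord = myW i) :
    h = (genA * genB) ^ i :=
  toWord_injective (by rw [hW, my_toWord_abpow])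

lemma my_toWord_eq_abpowa {h : FreeGroup (Fin 2)} {i : ℕ}
    (hW : h.toWord = myW i ++ [((0 : Fin 2), true)]) : h = (genA * genB) ^ i * genA :=
  toWord_injective (by rw [hW, my_abpowa_mk, my_toWord_W_append i _ my_chain_a])

lemma my_wlen_abpowa (i : ℕ) : wlen ((genA * genB) ^ i * genA) = 2 * i + 1 := by
  show (FreeGroup.toWord _).length = _
  rw [my_abpowa_mk, my_toWord_W_append i _ my_chain_a, List.length_append, myW_length]
  rfl

lemma my_wlen_abpowa_ab (i : ℕ) :
    wlen ((genA * genB) ^ i * genA * (genA * genB)) = 2 * i + 3 := by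
  show (FreeGroup.toWord _).length = _
  rw [my_abpowa_ab_mk, my_toWord_W_append i _ my_chain_aab, List.length_append, myW_length]
  rfl

lemma my_wminus_empty (n : ℕ) : wminus (genA * genB) ((genA * genB) ^ n) = ∅ := by
  ext h
  simp only [wminus, Set.mem_setOf_eq, Set.mem_empty_iff_false, iff_false]
  rintro ⟨h1, h2, _⟩
  have hpre : h.toWord <+: ((genA * genB) ^ n).toWord := (my_wlen_prefix_iff h _).mp h2
  rw [my_toWord_abpow] at hpre
  rcases my_prefix_W hpre with ⟨i, hi, hW⟩ | ⟨i, hi, hW⟩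
  · have hh : h = (genA * genB) ^ i := my_toWord_eq_abpow hW
    rw [hh, ← pow_succ, my_wlen_abpow, my_wlen_abpow, my_wlen_ab] at h1
    omega
  · have hh : h = (genA * genB) ^ i * genA := my_toWord_eq_abpowa hW
    rw [hh, my_wlen_abpowa, my_wlen_abpowa_ab, my_wlen_ab] at h1
    omega

lemma my_wplus_eq (n : ℕ) :
    wplus (genA * genB) ((genA * genB) ^ n)
      = {h | ∃ i : ℕ, i < n ∧ h = (genA * genB) ^ i} := by
  ext h
  simp only [wplus, Set.mem_setOf_eq]
  constructor
  · rintro ⟨h1, h2, h3⟩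
    have hpre : h.toWord <+: ((genA * genB) ^ n).toWord := (my_wlen_prefix_iff h _).mp h2
    rw [my_toWord_abpow] at hpre
    rcases my_prefix_W hpre with ⟨i, hi, hW⟩ | ⟨i, hi, hW⟩
    · have hh : h = (genA * genB) ^ i := my_toWord_eq_abpow hW
      refine ⟨i, ?_, hh⟩
      -- from h3 : h * w is also a prefix, so 2*(i+1) ≤ 2*n
      have hpre2 : (h * (genA * genB)).toWord <+: ((genA * genB) ^ n).toWord :=
        (my_wlen_prefix_iff _ _).mp h3
      rw [hh, ← pow_succ, my_toWord_abpow, my_toWord_abpow] at hpre2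
      have := hpre2.length_le
      rw [myW_length, myW_length] at this
      omega
    · exfalso
      have hh : h = (genA * genB) ^ i * genA := my_toWord_eq_abpowa hW
      have hpre2 : (h * (genA * genB)).toWord <+: ((genA * genB) ^ n).toWord :=
        (my_wlen_prefix_iff _ _).mp h3
      rw [hh, my_toWord_abpow,
        my_abpowa_ab_mk, my_toWord_W_append i _ my_chain_aab] at hpre2
      obtain ⟨t, ht⟩ := hpre2
      have hn' : n = i + ((n - i - 1) + 1) := by omega
      rw [hn', myW_append] at ht
      rw [List.append_assoc] at ht
      have ht2 := List.append_cancel_left ht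
      rw [myW] at ht2
      simp only [List.cons_append, List.cons.injEq] at ht2
      exact absurd ht2.2.1.symm (by decide)
  · rintro ⟨i, hi, rfl⟩
    have e1 : wlen ((genA * genB) ^ i * (genA * genB)) = 2 * (i + 1) := by
      rw [← pow_succ]; exact my_wlen_abpow _
    refine ⟨?_, ?_, ?_⟩
    · rw [e1, my_wlen_abpow, my_wlen_ab]; omega
    · apply (my_wlen_prefix_iff _ _).mpr
      rw [my_toWord_abpow, my_toWord_abpow]
      exact my_W_prefix (by omega)
    · apply (my_wlen_prefix_iff _ _).mpr
      rw [← pow_succ, my_toWord_abpow, my_toWord_abpow]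
      exact my_W_prefix (by omega)

end SetFacts

section Analytic

open FreeGroup

lemma my_aa_ne_one : genA * genA ≠ 1 := by
  intro hc
  exact my_abpow_ne_aa 0 0 (by simp [hc])

lemma my_vinj : Function.Injective (fun i : ℕ => (genA * genB) ^ i * (genA * genA)) := by
  intro i j h
  exact my_abpow_inj (mul_right_cancel (a := (genA * genB) ^ i) h)

lemma my_pi_single
    (π : FreeGroup (Fin 2) →
      (↥(l1zero (FreeGroup (Fin 2))) →L[ℝ] ↥(l1zero (FreeGroup (Fin 2)))))
    (hπpt : ∀ (g : FreeGroup (Fin 2)) (f : ↥(l1zero (FreeGroup (Fin 2))))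
      (x : FreeGroup (Fin 2)),
      ((π g f : ↥(l1zero (FreeGroup (Fin 2)))) : lp (fun _ : FreeGroup (Fin 2) => ℝ) 1) x
        = (f : lp (fun _ : FreeGroup (Fin 2) => ℝ) 1) (g⁻¹ * x))
    (e : ↥(l1zero (FreeGroup (Fin 2))))
    (he : (e : lp (fun _ : FreeGroup (Fin 2) => ℝ) 1)
      = lp.single 1 (1 : FreeGroup (Fin 2)) (1 : ℝ) - lp.single 1 (genA * genA) (1 : ℝ))
    (h : FreeGroup (Fin 2)) :
    ((π h e : ↥(l1zero (FreeGroup (Fin 2)))) : lp (fun _ : FreeGroup (Fin 2) => ℝ) 1)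
      = lp.single 1 h (1 : ℝ) - lp.single 1 (h * (genA * genA)) (1 : ℝ) := by
  apply lp.ext
  funext x
  rw [hπpt h e x, he]
  have k1 : h⁻¹ * x = 1 ↔ x = h := by rw [inv_mul_eq_one, eq_comm]
  have k2 : h⁻¹ * x = genA * genA ↔ x = h * (genA * genA) := by
    rw [inv_mul_eq_iff_eq_mul]
  have k3 : h ≠ h * (genA * genA) := by
    rw [Ne, left_eq_mul]; exact my_aa_ne_one
  simp only [lp.coeFn_sub, Pi.sub_apply, lp.single_apply, Pi.single_apply, eq_rec_constant]
  by_cases hx1 : x = h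
  · rw [if_pos (k1.mpr hx1), if_pos hx1, if_neg (k2.not.mpr (hx1 ▸ k3)),
      if_neg (hx1 ▸ k3)]
  · by_cases hx2 : x = h * (genA * genA)
    · rw [if_neg (k1.not.mpr hx1), if_neg hx1, if_pos (k2.mpr hx2), if_pos hx2]
    · rw [if_neg (k1.not.mpr hx1), if_neg hx1, if_neg (k2.not.mpr hx2), if_neg hx2]

end Analytic

/-- The Brooks-type map `η(g) = ∑_{h ∈ w₊(g)} π(h)e − ∑_{h ∈ w₋(g)} π(h)e` associated to the
left regular representation `π` of `F₂` on `ℓ¹₀F₂`, a word `w` and a vector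
`e ∈ ℓ¹₀F₂`. -/
noncomputable def etaReg
    (π : FreeGroup (Fin 2) →
      (↥(l1zero (FreeGroup (Fin 2))) →L[ℝ] ↥(l1zero (FreeGroup (Fin 2)))))
    (w : FreeGroup (Fin 2)) (e : ↥(l1zero (FreeGroup (Fin 2))))
    (g : FreeGroup (Fin 2)) : ↥(l1zero (FreeGroup (Fin 2))) :=
  (∑ᶠ h ∈ wplus w g, π h e) - ∑ᶠ h ∈ wminus w g, π h e

/-- For the left regular representation `π` of `F₂` on `ℓ¹₀F₂`, the vector
`e = δ₁ − δ_{a²}` and the word `w = ab`, for every `n ≥ 1` one has `w₋((ab)ⁿ) = ∅` and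
`w₊((ab)ⁿ) = {(ab)^i : 0 ≤ i ≤ n−1}`, hence
`η((ab)ⁿ) = ∑_{i=0}^{n−1} (δ_{(ab)^i} − δ_{(ab)^i a²})` and `‖η((ab)ⁿ)‖ = 2n`;
in particular `η` is unbounded. -/
theorem etaReg_on_ab_pows
    (π : FreeGroup (Fin 2) →
      (↥(l1zero (FreeGroup (Fin 2))) →L[ℝ] ↥(l1zero (FreeGroup (Fin 2)))))
    (hπpt : ∀ (g : FreeGroup (Fin 2)) (f : ↥(l1zero (FreeGroup (Fin 2))))
      (x : FreeGroup (Fin 2)),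
      ((π g f : ↥(l1zero (FreeGroup (Fin 2)))) : lp (fun _ : FreeGroup (Fin 2) => ℝ) 1) x
        = (f : lp (fun _ : FreeGroup (Fin 2) => ℝ) 1) (g⁻¹ * x))
    (e : ↥(l1zero (FreeGroup (Fin 2))))
    (he : (e : lp (fun _ : FreeGroup (Fin 2) => ℝ) 1)
      = lp.single 1 (1 : FreeGroup (Fin 2)) (1 : ℝ) - lp.single 1 (genA * genA) (1 : ℝ))
    (n : ℕ) (hn : 1 ≤ n) :
    wminus (genA * genB) ((genA * genB) ^ n) = ∅ ∧
    wplus (genA * genB) ((genA * genB) ^ n)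
      = {h | ∃ i : ℕ, i < n ∧ h = (genA * genB) ^ i} ∧
    ((etaReg π (genA * genB) e ((genA * genB) ^ n) :
        ↥(l1zero (FreeGroup (Fin 2)))) : lp (fun _ : FreeGroup (Fin 2) => ℝ) 1)
      = ∑ i ∈ Finset.range n,
          (lp.single 1 ((genA * genB) ^ i) (1 : ℝ)
            - lp.single 1 ((genA * genB) ^ i * (genA * genA)) (1 : ℝ)) ∧
    ‖etaReg π (genA * genB) e ((genA * genB) ^ n)‖ = 2 * (n : ℝ) := by
  have hcoe : ((etaReg π (genA * genB) e ((genA * genB) ^ n) :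
        ↥(l1zero (FreeGroup (Fin 2)))) : lp (fun _ : FreeGroup (Fin 2) => ℝ) 1)
      = ∑ i ∈ Finset.range n,
          (lp.single 1 ((genA * genB) ^ i) (1 : ℝ)
            - lp.single 1 ((genA * genB) ^ i * (genA * genA)) (1 : ℝ)) := by
    unfold etaReg
    rw [my_wminus_empty n, finsum_mem_empty, sub_zero, my_wplus_eq n]
    have hset : {h | ∃ i : ℕ, i < n ∧ h = (genA * genB) ^ i}
        = (fun i : ℕ => (genA * genB) ^ i) '' Set.Iio n := by
      ext h
      simp only [Set.mem_setOf_eq, Set.mem_image, Set.mem_Iio]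
      exact ⟨fun ⟨i, hi, hh⟩ => ⟨i, hi, hh.symm⟩, fun ⟨i, hi, hh⟩ => ⟨i, hi, hh.symm⟩⟩
    rw [hset, finsum_mem_image (my_abpow_inj.injOn), ← Finset.coe_range,
      finsum_mem_coe_finset]
    rw [AddSubmonoidClass.coe_finset_sum]
    exact Finset.sum_congr rfl fun i _ => my_pi_single π hπpt e he _
  refine ⟨my_wminus_empty n, my_wplus_eq n, hcoe, ?_⟩
  -- the norm computation
  let u : ℕ → FreeGroup (Fin 2) := fun i => (genA * genB) ^ i
  let v : ℕ → FreeGroup (Fin 2) := fun i => (genA * genB) ^ i * (genA * genA)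
  set F : lp (fun _ : FreeGroup (Fin 2) => ℝ) 1 :=
    ∑ i ∈ Finset.range n,
      (lp.single 1 ((genA * genB) ^ i) (1 : ℝ)
        - lp.single 1 ((genA * genB) ^ i * (genA * genA)) (1 : ℝ)) with hF_def
  have hnorm1 : ‖etaReg π (genA * genB) e ((genA * genB) ^ n)‖ = ‖F‖ := by
    rw [Submodule.coe_norm, hcoe]
  rw [hnorm1]
  -- pointwise values of F
  have hFx : ∀ x : FreeGroup (Fin 2),
      F x = ∑ i ∈ Finset.range n,
        ((if x = u i then (1 : ℝ) else 0) - (if x = v i then (1 : ℝ) else 0)) := by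
    intro x
    show F x = _
    rw [hF_def, lp.coeFn_sum, Finset.sum_apply]
    refine Finset.sum_congr rfl fun i _ => ?_
    simp only [lp.coeFn_sub, Pi.sub_apply, lp.single_apply, Pi.single_apply, eq_rec_constant, dite_eq_ite]
    rfl
  have huv : ∀ i j : ℕ, u i ≠ v j := fun i j => my_abpow_ne_aa i j
  have hFu : ∀ i ∈ Finset.range n, F (u i) = 1 := by
    intro i hi
    rw [hFx]
    have : ∀ j ∈ Finset.range n,
        ((if u i = u j then (1 : ℝ) else 0) - (if u i = v j then (1 : ℝ) else 0))
          = if j = i then (1 : ℝ) else 0 := by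
      intro j _
      rw [if_neg (huv i j), sub_zero]
      by_cases hij : j = i
      · rw [if_pos (by rw [hij]), if_pos hij]
      · rw [if_neg (fun hc => hij (my_abpow_inj hc).symm), if_neg hij]
    rw [Finset.sum_congr rfl this, Finset.sum_ite_eq' _ _ (fun _ => (1 : ℝ)), if_pos hi]
  have hFv : ∀ i ∈ Finset.range n, F (v i) = -1 := by
    intro i hi
    rw [hFx]
    have : ∀ j ∈ Finset.range n,
        ((if v i = u j then (1 : ℝ) else 0) - (if v i = v j then (1 : ℝ) else 0))
          = if j = i then (-1 : ℝ) else 0 := by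
      intro j _
      rw [if_neg (fun hc => huv j i hc.symm), zero_sub]
      by_cases hij : j = i
      · rw [if_pos (by rw [hij]), if_pos hij]
      · rw [if_neg (fun hc => hij (my_vinj hc).symm), if_neg hij, neg_zero]
    rw [Finset.sum_congr rfl this, Finset.sum_ite_eq' _ _ (fun _ => (-1 : ℝ)), if_pos hi]
  -- the support
  set T : Finset (FreeGroup (Fin 2)) :=
    (Finset.range n).image u ∪ (Finset.range n).image v with hT_def
  have hzero : ∀ x ∉ T, ‖F x‖ = 0 := by
    intro x hx
    simp only [hT_def, Finset.mem_union, Finset.mem_image, Finset.mem_range, not_or,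
      not_exists, not_and] at hx
    rw [hFx]
    have : ∀ j ∈ Finset.range n,
        ((if x = u j then (1 : ℝ) else 0) - (if x = v j then (1 : ℝ) else 0)) = 0 := by
      intro j hj
      rw [if_neg (fun hc => hx.1 j (Finset.mem_range.1 hj) hc.symm),
        if_neg (fun hc => hx.2 j (Finset.mem_range.1 hj) hc.symm), sub_zero]
    rw [Finset.sum_congr rfl this, Finset.sum_const_zero, norm_zero]
  have hnorm2 : ‖F‖ = ∑' x : FreeGroup (Fin 2), ‖F x‖ := by
    have h1 := lp.norm_eq_tsum_rpow (p := 1) (by norm_num) F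
    simpa using h1
  rw [hnorm2, tsum_eq_sum hzero]
  have hdisj : Disjoint ((Finset.range n).image u) ((Finset.range n).image v) := by
    rw [Finset.disjoint_left]
    rintro x hx1 hx2
    simp only [Finset.mem_image, Finset.mem_range] at hx1 hx2
    obtain ⟨i, _, rfl⟩ := hx1
    obtain ⟨j, _, hj⟩ := hx2
    exact huv i j hj.symm
  rw [hT_def, Finset.sum_union hdisj,
    Finset.sum_image (fun i _ j _ hij => my_abpow_inj hij),
    Finset.sum_image (fun i _ j _ hij => my_vinj hij)]
  have s1 : ∀ i ∈ Finset.range n, ‖F ((genA * genB) ^ i)‖ = 1 := fun i hi => by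
    rw [hFu i hi]; exact norm_one
  have s2 : ∀ i ∈ Finset.range n, ‖F ((genA * genB) ^ i * (genA * genA))‖ = 1 := fun i hi => by
    rw [hFv i hi]; simp
  rw [Finset.sum_congr rfl s1, Finset.sum_congr rfl s2]
  simp only [Finset.sum_const, Finset.card_range, nsmul_eq_mul, mul_one]
  ring
end
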